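/- arXiv:1008.2329 — 5 statements merged into one kernel-verified Lean document; each statement's English description precedes it below -/
import Mathlib

section
/- Let X ⊆ ℝ^n be a nonempty compact set and let φ : ℝ^n → [0, +∞) be a C² mapping that is proper (φ^{-1}([s,t]) is compact for all s < t) and satisfies φ(x) = 0 if and only if x ∈ X, and ∇φ(x) = 0 if and only if x ∈ X. Then X is a global attractor for the equation ẋ = −∇φ(x): every initial value problem has a unique solution defined for all t ≥ 0, every point of X is an equilibrium (so X is invariant), and for every bounded B ⊆ ℝ^n, dist(Φ_t(B), X) → 0 as t → ∞, where Φ_t is the induced semiflow. -/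
open Metric Set Bornology

noncomputable section

section LyapunovAux

variable {n : ℕ}

local notation "E" => EuclideanSpace ℝ (Fin n)

lemma lyap_contDiff_gradient (φ : E → ℝ) (hφ : ContDiff ℝ 2 φ) :
    ContDiff ℝ 1 (gradient φ) := by
  have h1 : ContDiff ℝ 1 (fderiv ℝ φ) := hφ.fderiv_right (by norm_num)
  exact ((InnerProductSpace.toDual ℝ E).symm.contDiff).comp h1

/-- compactness of sublevel sets -/
lemma lyap_sublevel (φ : E → ℝ) (hφnn : ∀ x, 0 ≤ φ x)
    (hproper : ∀ s t : ℝ, s < t → IsCompact (φ ⁻¹' Set.Icc s t))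
    (c : ℝ) (hc : 0 ≤ c) : IsCompact {z : E | φ z ≤ c} := by
  have : {z : E | φ z ≤ c} = φ ⁻¹' Set.Icc (-1) c := by
    ext z; simp only [mem_setOf_eq, mem_preimage, mem_Icc]
    exact ⟨fun h => ⟨by linarith [hφnn z], h⟩, fun h => h.2⟩
  rw [this]; exact hproper (-1) c (by linarith)

/-- the cutoff vector field -/
lemma lyap_cutoff (φ : E → ℝ) (hφ : ContDiff ℝ 2 φ) (hφnn : ∀ x, 0 ≤ φ x)
    (hproper : ∀ s t : ℝ, s < t → IsCompact (φ ⁻¹' Set.Icc s t)) (c : ℝ) (hc : 0 ≤ c) :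
    ∃ w : E → E, (∀ z, φ z ≤ c → w z = -gradient φ z) ∧
      (∀ z, ∃ θ : ℝ, 0 ≤ θ ∧ w z = θ • (-gradient φ z)) ∧
      (∃ K : NNReal, LipschitzWith K w) ∧ (∃ C : ℝ, 0 ≤ C ∧ ∀ z, ‖w z‖ ≤ C) := by
  set w : E → E := fun z => Real.smoothTransition (c + 1 - φ z) • (-gradient φ z) with hw
  have hcd : ContDiff ℝ 1 w := by
    apply ContDiff.fun_smul
    · exact Real.smoothTransition.contDiff.comp
        ((contDiff_const.sub (hφ.of_le (by norm_num))))
    · exact (lyap_contDiff_gradient φ hφ).neg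
  have hsupp : HasCompactSupport w := by
    apply IsCompact.of_isClosed_subset (lyap_sublevel φ hφnn hproper (c + 1) (by linarith))
      (isClosed_tsupport w)
    apply closure_minimal _ (isClosed_le (hφ.continuous) continuous_const)
    intro z hz
    simp only [mem_setOf_eq]
    by_contra hlt
    push_neg at hlt
    apply hz
    simp only [hw, Real.smoothTransition.zero_of_nonpos (by linarith : c + 1 - φ z ≤ 0), zero_smul]
  obtain ⟨K, hK⟩ := hcd.lipschitzWith_of_hasCompactSupport hsupp one_ne_zero
  obtain ⟨C, hC⟩ := hsupp.exists_bound_of_continuous hcd.continuous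
  refine ⟨w, ?_, ?_, ⟨K, hK⟩, ⟨C, le_trans (norm_nonneg _) (hC 0), hC⟩⟩
  · intro z hz
    simp [hw, Real.smoothTransition.one_of_one_le (by linarith : (1:ℝ) ≤ c + 1 - φ z)]
  · intro z
    exact ⟨_, Real.smoothTransition.nonneg _, rfl⟩

/-- uniqueness for a globally Lipschitz field, forward in time -/
lemma lyap_unique_lip {w : E → E} {K : NNReal} (hK : LipschitzWith K w)
    {x y : ℝ → E} (hx : ∀ t, 0 ≤ t → HasDerivWithinAt x (w (x t)) (Ici 0) t)
    (hy : ∀ t, 0 ≤ t → HasDerivWithinAt y (w (y t)) (Ici 0) t)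
    (h0 : x 0 = y 0) : ∀ t, 0 ≤ t → x t = y t := by
  intro t ht
  have hcx : ContinuousOn x (Icc 0 t) := fun s hs =>
    ((hx s hs.1).continuousWithinAt).mono (fun u hu => hu.1)
  have hcy : ContinuousOn y (Icc 0 t) := fun s hs =>
    ((hy s hs.1).continuousWithinAt).mono (fun u hu => hu.1)
  exact ODE_solution_unique (v := fun _ => w) (fun _ => hK) hcx
    (fun s hs => (hx s hs.1).mono (Ici_subset_Ici.2 hs.1)) hcy
    (fun s hs => (hy s hs.1).mono (Ici_subset_Ici.2 hs.1)) h0 ⟨ht, le_rfl⟩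

/-- global forward existence for a globally Lipschitz bounded field -/
lemma lyap_exists_lip {w : E → E} {K : NNReal} (hK : LipschitzWith K w)
    {C : ℝ} (hC0 : 0 ≤ C) (hC : ∀ z, ‖w z‖ ≤ C) (x₀ : E) :
    ∃ x : ℝ → E, x 0 = x₀ ∧ ∀ t, 0 ≤ t → HasDerivWithinAt x (w (x t)) (Ici 0) t := by
  -- solutions on [0, m] for each m : ℕ
  have hsol : ∀ m : ℕ, ∃ f : ℝ → E, f 0 = x₀ ∧
      ∀ s ∈ Icc (0:ℝ) m, HasDerivWithinAt f (w (f s)) (Icc (0:ℝ) m) s := by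
    intro m
    have hpl : IsPicardLindelof (fun _ : ℝ => w) (tmin := 0) (tmax := m)
        ⟨0, ⟨le_rfl, Nat.cast_nonneg m⟩⟩ x₀ ⟨C * m, by positivity⟩ 0 ⟨C, hC0⟩ K := by
      apply IsPicardLindelof.of_time_independent
      · exact fun z _ => hC z
      · exact hK.lipschitzOnWith
      · show C * max ((m:ℝ) - 0) (0 - 0) ≤ C * m - 0
        rw [max_eq_left (by simp)]; simp
    obtain ⟨f, hf0, hf⟩ := hpl.exists_eq_forall_mem_Icc_hasDerivWithinAt₀
    exact ⟨f, hf0, hf⟩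
  choose sol hsol0 hsolD using hsol
  -- upgraded derivative: within `Ici s` for s in `Ico 0 m`
  have hD' : ∀ m : ℕ, ∀ s ∈ Ico (0:ℝ) m, HasDerivWithinAt (sol m) (w (sol m s)) (Ici s) s := by
    intro m s hs
    refine (hsolD m s ⟨hs.1, hs.2.le⟩).mono_of_mem_nhdsWithin ?_
    rw [mem_nhdsWithin]
    exact ⟨Iio m, isOpen_Iio, hs.2, fun u hu => ⟨le_trans hs.1 hu.2, hu.1.le⟩⟩
  have hcont : ∀ m : ℕ, ContinuousOn (sol m) (Icc (0:ℝ) m) := fun m s hs =>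
    (hsolD m s hs).continuousWithinAt
  -- agreement of solutions
  have hagree : ∀ m m' : ℕ, m ≤ m' → ∀ s ∈ Icc (0:ℝ) m, sol m s = sol m' s := by
    intro m m' hmm s hs
    have hsub : Icc (0:ℝ) m ⊆ Icc (0:ℝ) m' := Icc_subset_Icc le_rfl (by exact_mod_cast hmm)
    refine ODE_solution_unique (v := fun _ => w) (fun _ => hK) (hcont m)
      (fun u hu => hD' m u hu) ((hcont m').mono hsub)
      (fun u hu => hD' m' u ⟨hu.1, lt_of_lt_of_le hu.2 (by exact_mod_cast hmm)⟩)
      ((hsol0 m).trans (hsol0 m').symm) hs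
  -- glue
  refine ⟨fun t => sol (⌊t⌋₊ + 1) t, ?_, ?_⟩
  · simpa using hsol0 1
  · intro t ht
    set m : ℕ := ⌊t⌋₊ + 1 with hm
    have htm : t < m := by exact_mod_cast Nat.lt_floor_add_one t
    have hx_eq : ∀ s ∈ Icc (0:ℝ) m, sol m s = sol (⌊s⌋₊ + 1) s := by
      intro s hs
      rcases le_total (⌊s⌋₊ + 1 : ℕ) m with h | h
      · exact (hagree _ m h s ⟨hs.1, (by exact_mod_cast (Nat.lt_floor_add_one s).le)⟩).symm
      · exact hagree m _ h s hs
    have hDm : HasDerivWithinAt (sol m) (w (sol m t)) (Icc (0:ℝ) m) t :=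
      hsolD m t ⟨ht, htm.le⟩
    have : HasDerivWithinAt (fun s => sol (⌊s⌋₊ + 1) s) (w (sol m t)) (Icc (0:ℝ) m) t := by
      refine hDm.congr (fun s hs => (hx_eq s hs).symm) ?_
      exact (hx_eq t ⟨ht, htm.le⟩).symm
    have h2 : HasDerivWithinAt (fun s => sol (⌊s⌋₊ + 1) s)
        (w (sol m t)) (Ici (0:ℝ)) t := by
      refine this.mono_of_mem_nhdsWithin ?_
      rw [mem_nhdsWithin]
      exact ⟨Iio m, isOpen_Iio, htm, fun u hu => ⟨hu.2, hu.1.le⟩⟩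
    have heq : sol m t = sol (⌊t⌋₊ + 1) t := rfl
    rwa [heq] at h2

lemma lyap_chain (φ : E → ℝ) (hφ : ContDiff ℝ 2 φ) {x : ℝ → E} {u : E} {t : ℝ}
    (hx : HasDerivWithinAt x u (Ici 0) t) :
    HasDerivWithinAt (fun s => φ (x s)) (inner ℝ (gradient φ (x t)) u : ℝ) (Ici 0) t := by
  have hdiff : DifferentiableAt ℝ φ (x t) :=
    (hφ.differentiable (by norm_num)).differentiableAt
  have hf : HasFDerivAt φ (InnerProductSpace.toDual ℝ E (gradient φ (x t))) (x t) :=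
    hasGradientAt_iff_hasFDerivAt.mp hdiff.hasGradientAt
  have := hf.comp_hasDerivWithinAt t hx
  rw [InnerProductSpace.toDual_apply_apply] at this
  exact this

/-- `φ` is non-increasing along any trajectory whose velocity has nonpositive
inner product with the gradient. -/
lemma lyap_antitone (φ : E → ℝ) (hφ : ContDiff ℝ 2 φ) {x u : ℝ → E}
    (hx : ∀ t, 0 ≤ t → HasDerivWithinAt x (u t) (Ici 0) t)
    (hneg : ∀ t, 0 < t → inner ℝ (gradient φ (x t)) (u t) ≤ (0:ℝ)) :
    AntitoneOn (fun t => φ (x t)) (Ici 0) := by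
  refine antitoneOn_of_hasDerivWithinAt_nonpos (convex_Ici 0)
    (f' := fun t => inner ℝ (gradient φ (x t)) (u t))
    (fun t ht => (lyap_chain φ hφ (hx t ht)).continuousWithinAt) (fun t ht => ?_) (fun t ht => ?_)
  · rw [interior_Ici] at ht ⊢
    exact ((lyap_chain φ hφ (hx t ht.le)).mono (Ioi_subset_Ici le_rfl))
  · rw [interior_Ici] at ht
    exact hneg t ht

/-- quantitative decay along a trajectory -/
lemma lyap_decay (φ : E → ℝ) (hφ : ContDiff ℝ 2 φ) {x u : ℝ → E} {δ T : ℝ} (hT : 0 ≤ T)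
    (hx : ∀ t, 0 ≤ t → HasDerivWithinAt x (u t) (Ici 0) t)
    (hneg : ∀ t, t ∈ Ioo 0 T → inner ℝ (gradient φ (x t)) (u t) + δ ≤ (0:ℝ)) :
    φ (x T) + δ * T ≤ φ (x 0) := by
  have key : AntitoneOn (fun t => φ (x t) + δ * t) (Icc 0 T) := by
    refine antitoneOn_of_hasDerivWithinAt_nonpos (convex_Icc 0 T)
      (f' := fun t => inner ℝ (gradient φ (x t)) (u t) + δ) (fun t ht => ?_) (fun t ht => ?_)
      (fun t ht => ?_)
    · exact ((lyap_chain φ hφ (hx t ht.1)).add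
        (by simpa using (hasDerivWithinAt_id t (Ici 0)).const_mul δ)).continuousWithinAt.mono
        (fun s hs => hs.1)
    · rw [interior_Icc] at ht
      exact ((lyap_chain φ hφ (hx t ht.1.le)).add
        (by simpa using (hasDerivWithinAt_id t (Ici 0)).const_mul δ)).mono
        (fun s hs => by rw [interior_Icc] at hs; exact hs.1.le)
    · rw [interior_Icc] at ht
      exact hneg t ht
  have := key (left_mem_Icc.2 hT) (right_mem_Icc.2 hT) hT
  simpa using this

end LyapunovAux


/-- A forward (`t ≥ 0`) solution of the ODE `ẋ = v (x)`. -/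
def IsForwardSolution {n : ℕ} (v : EuclideanSpace ℝ (Fin n) → EuclideanSpace ℝ (Fin n))
    (x : ℝ → EuclideanSpace ℝ (Fin n)) : Prop :=
  ∀ t : ℝ, 0 ≤ t → HasDerivWithinAt x (v (x t)) (Set.Ici 0) t

/-- **Lyapunov's theorem.** If `φ : ℝ^n → [0,∞)` is `C²`, proper, vanishes exactly on the
nonempty compact set `X` and has `∇φ = 0` exactly on `X`, then `X` is a global attractor for
`ẋ = -∇φ(x)`: forward solutions exist and are unique, every point of `X` is an equilibrium
(so `X` is invariant), and every bounded set is attracted to `X`. -/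
theorem lyapunov_global_attractor
    (n : ℕ) (X : Set (EuclideanSpace ℝ (Fin n))) (hXne : X.Nonempty) (hXcomp : IsCompact X)
    (φ : EuclideanSpace ℝ (Fin n) → ℝ)
    (hφ : ContDiff ℝ 2 φ) (hφnn : ∀ x, 0 ≤ φ x)
    (hproper : ∀ s t : ℝ, s < t → IsCompact (φ ⁻¹' Set.Icc s t))
    (hzero : ∀ x, φ x = 0 ↔ x ∈ X)
    (hgrad : ∀ x, gradient φ x = 0 ↔ x ∈ X) :
    -- existence and uniqueness of forward solutions
    (∀ x₀, ∃ x : ℝ → EuclideanSpace ℝ (Fin n), x 0 = x₀ ∧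
      IsForwardSolution (fun y => -gradient φ y) x) ∧
    (∀ x y : ℝ → EuclideanSpace ℝ (Fin n),
      IsForwardSolution (fun z => -gradient φ z) x →
      IsForwardSolution (fun z => -gradient φ z) y →
      x 0 = y 0 → ∀ t : ℝ, 0 ≤ t → x t = y t) ∧
    ∃ Φ : ℝ → EuclideanSpace ℝ (Fin n) → EuclideanSpace ℝ (Fin n),
      (∀ y, Φ 0 y = y) ∧
      (∀ y, IsForwardSolution (fun z => -gradient φ z) (fun t => Φ t y)) ∧
      -- every point of `X` is an equilibrium, so `X` is invariant
      (∀ x ∈ X, ∀ t : ℝ, 0 ≤ t → Φ t x = x) ∧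
      (∀ t : ℝ, 0 ≤ t → Φ t '' X = X) ∧
      -- every bounded set is attracted to `X`
      (∀ B : Set (EuclideanSpace ℝ (Fin n)), IsBounded B → ∀ ε : ℝ, 0 < ε →
        ∃ T : ℝ, ∀ t : ℝ, T ≤ t → ∀ y ∈ B, infDist (Φ t y) X ≤ ε) := by
  -- the inner product of the gradient with minus itself
  have hinner : ∀ z : EuclideanSpace ℝ (Fin n), (inner ℝ (gradient φ z) (-gradient φ z) : ℝ) = -‖gradient φ z‖ ^ 2 := by
    intro z
    rw [inner_neg_right, real_inner_self_eq_norm_sq]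
  -- antitonicity of φ along forward solutions
  have hanti : ∀ x : ℝ → EuclideanSpace ℝ (Fin n), IsForwardSolution (fun z => -gradient φ z) x →
      AntitoneOn (fun t => φ (x t)) (Ici 0) := by
    intro x hx
    refine lyap_antitone φ hφ (u := fun t => -gradient φ (x t)) (fun t ht => hx t ht)
      (fun t _ => ?_)
    show inner ℝ (gradient φ (x t)) (-gradient φ (x t)) ≤ (0:ℝ)
    rw [hinner]
    exact neg_nonpos.mpr (sq_nonneg _)
  -- existence
  have hexist : ∀ x₀ : EuclideanSpace ℝ (Fin n), ∃ x : ℝ → EuclideanSpace ℝ (Fin n), x 0 = x₀ ∧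
      IsForwardSolution (fun y => -gradient φ y) x := by
    intro x₀
    obtain ⟨w, hw_eq, hw_theta, ⟨K, hK⟩, ⟨C, hC0, hC⟩⟩ :=
      lyap_cutoff φ hφ hφnn hproper (φ x₀) (hφnn x₀)
    obtain ⟨x, hx0, hxD⟩ := lyap_exists_lip hK hC0 hC x₀
    have hxanti : AntitoneOn (fun t => φ (x t)) (Ici 0) := by
      refine lyap_antitone φ hφ (u := fun t => w (x t)) hxD (fun t _ => ?_)
      obtain ⟨θ, hθ, hwz⟩ := hw_theta (x t)
      show inner ℝ (gradient φ (x t)) (w (x t)) ≤ (0:ℝ)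
      rw [hwz, real_inner_smul_right, hinner]
      nlinarith [sq_nonneg ‖gradient φ (x t)‖]
    have hsub : ∀ t, 0 ≤ t → φ (x t) ≤ φ x₀ := by
      intro t ht
      have := hxanti (self_mem_Ici) ht ht
      simpa [hx0] using this
    refine ⟨x, hx0, fun t ht => ?_⟩
    have := hxD t ht
    rwa [hw_eq _ (hsub t ht)] at this
  -- uniqueness
  have huniq : ∀ x y : ℝ → EuclideanSpace ℝ (Fin n),
      IsForwardSolution (fun z => -gradient φ z) x →
      IsForwardSolution (fun z => -gradient φ z) y →
      x 0 = y 0 → ∀ t : ℝ, 0 ≤ t → x t = y t := by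
    intro x y hx hy h0
    set c := φ (x 0) with hcdef
    obtain ⟨w, hw_eq, hw_theta, ⟨K, hK⟩, ⟨C, hC0, hC⟩⟩ :=
      lyap_cutoff φ hφ hφnn hproper c (hφnn _)
    have hxc : ∀ t, 0 ≤ t → φ (x t) ≤ c := fun t ht => hanti x hx self_mem_Ici ht ht
    have hyc : ∀ t, 0 ≤ t → φ (y t) ≤ c := by
      intro t ht
      have := hanti y hy self_mem_Ici ht ht
      exact le_trans this (le_of_eq (congrArg φ h0.symm))
    have hx' : ∀ t, 0 ≤ t → HasDerivWithinAt x (w (x t)) (Ici 0) t := by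
      intro t ht; rw [hw_eq _ (hxc t ht)]; exact hx t ht
    have hy' : ∀ t, 0 ≤ t → HasDerivWithinAt y (w (y t)) (Ici 0) t := by
      intro t ht; rw [hw_eq _ (hyc t ht)]; exact hy t ht
    exact lyap_unique_lip hK hx' hy' h0
  refine ⟨hexist, huniq, fun t y => Classical.choose (hexist y) t, ?_, ?_, ?_, ?_, ?_⟩
  · exact fun y => (Classical.choose_spec (hexist y)).1
  · exact fun y => (Classical.choose_spec (hexist y)).2
  · -- equilibria
    intro x hx t ht
    have hconst : IsForwardSolution (fun z => -gradient φ z) (fun _ => x) := by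
      intro s hs
      have hg : -gradient φ x = 0 := by rw [(hgrad x).2 hx, neg_zero]
      simpa [hg] using hasDerivWithinAt_const s (Ici (0:ℝ)) x
    exact huniq _ (fun _ => x) (Classical.choose_spec (hexist x)).2 hconst
      ((Classical.choose_spec (hexist x)).1) t ht
  · -- invariance
    intro t ht
    have := fun x hx => huniq _ (fun _ => x) (Classical.choose_spec (hexist x)).2
      (by
        intro s hs
        have hg : -gradient φ x = 0 := by rw [(hgrad x).2 hx, neg_zero]
        simpa [hg] using hasDerivWithinAt_const s (Ici (0:ℝ)) x)
      ((Classical.choose_spec (hexist x)).1) t ht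
    calc (fun y => Classical.choose (hexist y) t) '' X = id '' X :=
          Set.image_congr fun a ha => this a ha
      _ = X := Set.image_id X
  · -- attraction
    intro B hB ε hε
    set Φ : ℝ → EuclideanSpace ℝ (Fin n) → EuclideanSpace ℝ (Fin n) := fun t y => Classical.choose (hexist y) t with hΦdef
    have hΦ0 : ∀ y, Φ 0 y = y := fun y => (Classical.choose_spec (hexist y)).1
    have hΦsol : ∀ y, IsForwardSolution (fun z => -gradient φ z) (fun t => Φ t y) :=
      fun y => (Classical.choose_spec (hexist y)).2
    have hΦanti : ∀ y, AntitoneOn (fun t => φ (Φ t y)) (Ici 0) := fun y => hanti _ (hΦsol y)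
    rcases B.eq_empty_or_nonempty with rfl | hBne
    · exact ⟨0, fun t _ y hy => absurd hy (notMem_empty y)⟩
    -- bound φ on B
    have hclos : IsCompact (closure B) := hB.isCompact_closure
    obtain ⟨z, hzB, hzmax⟩ := hclos.exists_isMaxOn hBne.closure hφ.continuous.continuousOn
    set c := φ z with hcdef
    have hc : 0 ≤ c := hφnn z
    have hBc : ∀ y ∈ B, φ y ≤ c := fun y hy => hzmax (subset_closure hy)
    have hΦc : ∀ y ∈ B, ∀ t, 0 ≤ t → φ (Φ t y) ≤ c := by
      intro y hy t ht
      have h1 : φ (Φ t y) ≤ φ (Φ 0 y) := hΦanti y self_mem_Ici ht ht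
      rw [hΦ0 y] at h1
      exact le_trans h1 (hBc y hy)
    by_cases hS : ∃ z', φ z' ≤ c ∧ ε ≤ infDist z' X
    · -- nontrivial case: the "far" region is nonempty
      set S : Set (EuclideanSpace ℝ (Fin n)) := {z' | φ z' ≤ c} ∩ {z' | ε ≤ infDist z' X} with hSdef
      have hScomp : IsCompact S :=
        (lyap_sublevel φ hφnn hproper c hc).inter_right
          (isClosed_le continuous_const (continuous_infDist_pt X))
      obtain ⟨z₀, hz₀S, hz₀min⟩ := hScomp.exists_isMinOn
        ⟨hS.choose, hS.choose_spec.1, hS.choose_spec.2⟩ hφ.continuous.continuousOn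
      set m := φ z₀ with hmdef
      have hz₀X : z₀ ∉ X := by
        intro hmem
        have h2 : ε ≤ infDist z₀ X := hz₀S.2
        rw [infDist_zero_of_mem hmem] at h2
        linarith
      have hm0 : 0 < m := lt_of_le_of_ne (hφnn z₀) (fun h => hz₀X ((hzero z₀).1 h.symm))
      have hmc : m ≤ c := hz₀S.1
      have hkey : ∀ z', φ z' ≤ c → φ z' < m → infDist z' X ≤ ε := by
        intro z' h1 h2
        by_contra h3
        exact absurd (hz₀min ⟨h1, (not_le.1 h3).le⟩) (not_le.2 h2)
      by_cases hA : (φ ⁻¹' Set.Icc (m/2) c).Nonempty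
      · -- the annulus is nonempty: get a uniform decay rate
        have hAcomp : IsCompact (φ ⁻¹' Set.Icc (m/2) c) := hproper _ _ (by linarith)
        obtain ⟨z₁, hz₁A, hz₁min⟩ := hAcomp.exists_isMinOn hA
          (((lyap_contDiff_gradient φ hφ).continuous.norm.pow 2).continuousOn)
        set δ := ‖gradient φ z₁‖ ^ 2 with hδdef
        have hz₁X : z₁ ∉ X := by
          intro hmem
          have := (hzero z₁).2 hmem
          have := hz₁A.1
          rw [(hzero z₁).2 hmem] at this
          linarith
        have hδ0 : 0 < δ :=
          pow_pos (norm_pos_iff.2 (fun h => hz₁X ((hgrad z₁).1 h))) 2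
        refine ⟨c/δ + 1, fun t htT y hy => ?_⟩
        have ht0 : (0:ℝ) ≤ t := le_trans (by positivity) htT
        have hmain : φ (Φ t y) < m := by
          by_contra hcon
          push_neg at hcon
          have hall : ∀ s ∈ Set.Icc (0:ℝ) t, Φ s y ∈ φ ⁻¹' Set.Icc (m/2) c := by
            intro s hs
            have hl : m ≤ φ (Φ s y) := le_trans hcon (hΦanti y hs.1 ht0 hs.2)
            exact ⟨by linarith, hΦc y hy s hs.1⟩
          have hdec := lyap_decay φ hφ (u := fun s => -gradient φ (Φ s y)) (δ := δ) ht0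
            (fun s hs => hΦsol y s hs)
            (fun s hs => by
              show (inner ℝ (gradient φ (Φ s y)) (-gradient φ (Φ s y)) : ℝ) + δ ≤ 0
              rw [hinner]
              have h3 : δ ≤ ‖gradient φ (Φ s y)‖ ^ 2 := hz₁min (hall s ⟨hs.1.le, hs.2.le⟩)
              linarith)
          rw [hΦ0 y] at hdec
          have h1 : φ y ≤ c := hBc y hy
          have h2 : m ≤ φ (Φ t y) := hcon
          have h4 : δ * (c / δ + 1) ≤ δ * t := mul_le_mul_of_nonneg_left htT hδ0.le
          rw [mul_add, mul_one, mul_div_cancel₀ _ (ne_of_gt hδ0)] at h4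
          linarith
        exact hkey _ (hΦc y hy t ht0) hmain
      · -- annulus empty: φ < m/2 everywhere below level c, i.e. B is already attracted
        refine ⟨1, fun t htT y hy => ?_⟩
        have ht0 : (0:ℝ) ≤ t := le_trans zero_le_one htT
        have h1 : φ (Φ t y) ≤ c := hΦc y hy t ht0
        have h2 : φ (Φ t y) < m := by
          by_contra hcon
          push_neg at hcon
          exact hA ⟨Φ t y, ⟨by linarith, h1⟩⟩
        exact hkey _ h1 h2
    · -- the far region is empty
      push_neg at hS
      exact ⟨1, fun t htT y hy =>
        (hS _ (hΦc y hy t (le_trans zero_le_one htT))).le⟩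
end
end

section
/- Let H be a real Hilbert space, 𝒜 ⊆ H compact, and L : H → ℝ^m a bounded linear map injective on 𝒜 for which there are constants C_L ≥ 1, γ > 0 and δ_L ∈ (0,1) such that |Lu − Lv| ≤ C_L‖u − v‖ for all u, v ∈ 𝒜, and |Lu − Lv| ≥ (1/C_L)·‖u − v‖/(−log‖u − v‖)^γ whenever u, v ∈ 𝒜 and 0 < ‖u − v‖ ≤ δ_L. Then: (a) for all u, v ∈ 𝒜 with 0 < ‖u − v‖ ≤ δ_L one has ‖u − v‖ ≤ C_L · |Lu − Lv| · (log(C_L/|Lu − Lv|))^γ; and (b) if in addition G : 𝒜 → H is Lipschitz with constant K, then for all u, v ∈ 𝒜 with 0 < ‖u − v‖ ≤ δ_L, |L(G(u)) − L(G(v))| ≤ C_L·K·‖L‖_op · |Lu − Lv| · (log(C_L/|Lu − Lv|))^γ, i.e. the embedded vector field g₁ := L∘G∘(L|_𝒜)^{-1} on L𝒜 is Lipschitz except for a logarithmic correction. -/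
open Metric Set

noncomputable section

/-- **Modulus of continuity of the inverse of an almost bi-Lipschitz embedding, and of the
embedded vector field.** If `L : H → ℝ^m` is injective on the compact set `𝒜` and
`γ`-almost bi-Lipschitz on `𝒜`, then (a) the inverse is Lipschitz up to a logarithmic
correction, and (b) for any `K`-Lipschitz `G : 𝒜 → H` the embedded vector field
`g₁ = L ∘ G ∘ (L|𝒜)⁻¹` is Lipschitz on `L𝒜` up to a logarithmic correction. -/
theorem almost_biLipschitz_inverse_modulus
    {H : Type*} [NormedAddCommGroup H] [InnerProductSpace ℝ H] [CompleteSpace H]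
    (m : ℕ) (𝒜 : Set H) (h𝒜 : IsCompact 𝒜)
    (L : H →L[ℝ] EuclideanSpace ℝ (Fin m)) (hinj : Set.InjOn L 𝒜)
    (CL γ δL : ℝ) (hCL : 1 ≤ CL) (hγ : 0 < γ) (hδ0 : 0 < δL) (hδ1 : δL < 1)
    (hupper : ∀ u ∈ 𝒜, ∀ v ∈ 𝒜, ‖L u - L v‖ ≤ CL * ‖u - v‖)
    (hlower : ∀ u ∈ 𝒜, ∀ v ∈ 𝒜, 0 < ‖u - v‖ → ‖u - v‖ ≤ δL →
      (1 / CL) * (‖u - v‖ / (-Real.log ‖u - v‖) ^ γ) ≤ ‖L u - L v‖) :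
    -- (a) the inverse of `L|𝒜` is Lipschitz up to a logarithmic correction
    (∀ u ∈ 𝒜, ∀ v ∈ 𝒜, 0 < ‖u - v‖ → ‖u - v‖ ≤ δL →
      ‖u - v‖ ≤ CL * ‖L u - L v‖ * (Real.log (CL / ‖L u - L v‖)) ^ γ) ∧
    -- (b) the embedded vector field is Lipschitz up to a logarithmic correction
    (∀ (G : H → H) (K : ℝ), (∀ u ∈ 𝒜, ∀ v ∈ 𝒜, ‖G u - G v‖ ≤ K * ‖u - v‖) →
      ∀ u ∈ 𝒜, ∀ v ∈ 𝒜, 0 < ‖u - v‖ → ‖u - v‖ ≤ δL →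
        ‖L (G u) - L (G v)‖ ≤
          CL * K * ‖L‖ * (‖L u - L v‖ * (Real.log (CL / ‖L u - L v‖)) ^ γ)) := by
  have hCL0 : (0:ℝ) < CL := lt_of_lt_of_le one_pos hCL
  have key : ∀ u ∈ 𝒜, ∀ v ∈ 𝒜, 0 < ‖u - v‖ → ‖u - v‖ ≤ δL →
      ‖u - v‖ ≤ CL * ‖L u - L v‖ * (Real.log (CL / ‖L u - L v‖)) ^ γ := by
    intro u hu v hv hr hrδ
    set r := ‖u - v‖ with hrdef
    set ε := ‖L u - L v‖ with hεdef
    have hr1 : r < 1 := hrδ.trans_lt hδ1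
    have hlog : 0 < -Real.log r := by
      have := Real.log_neg hr hr1; linarith
    have hpow : 0 < (-Real.log r) ^ γ := Real.rpow_pos_of_pos hlog γ
    have hlow := hlower u hu v hv hr hrδ
    have hε : 0 < ε := lt_of_lt_of_le (by positivity) hlow
    have hup := hupper u hu v hv
    have h1 : 1 / r ≤ CL / ε := by
      rw [div_le_div_iff₀ hr hε, one_mul]
      linarith [hup]
    have h2 : -Real.log r ≤ Real.log (CL / ε) := by
      rw [← Real.log_inv, ← one_div]
      exact Real.log_le_log (by positivity) h1
    have h3 : (-Real.log r) ^ γ ≤ (Real.log (CL / ε)) ^ γ :=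
      Real.rpow_le_rpow hlog.le h2 hγ.le
    have h4 : r / (-Real.log r) ^ γ ≤ CL * ε := by
      calc r / (-Real.log r) ^ γ = CL * ((1/CL) * (r / (-Real.log r) ^ γ)) := by
            field_simp
        _ ≤ CL * ε := mul_le_mul_of_nonneg_left hlow hCL0.le
    have h5 : r ≤ CL * ε * (-Real.log r) ^ γ := (div_le_iff₀ hpow).mp h4
    calc r ≤ CL * ε * (-Real.log r) ^ γ := h5
      _ ≤ CL * ε * (Real.log (CL / ε)) ^ γ :=
          mul_le_mul_of_nonneg_left h3 (by positivity)
  refine ⟨key, ?_⟩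
  intro G K hK u hu v hv hr hrδ
  have hK0 : 0 ≤ K := by
    have h1 := hK u hu v hv
    have h2 := norm_nonneg (G u - G v)
    nlinarith
  calc ‖L (G u) - L (G v)‖ = ‖L (G u - G v)‖ := by rw [map_sub]
    _ ≤ ‖L‖ * ‖G u - G v‖ := L.le_opNorm _
    _ ≤ ‖L‖ * (K * ‖u - v‖) :=
        mul_le_mul_of_nonneg_left (hK u hu v hv) (norm_nonneg _)
    _ ≤ ‖L‖ * (K * (CL * ‖L u - L v‖ * (Real.log (CL / ‖L u - L v‖)) ^ γ)) := by
        apply mul_le_mul_of_nonneg_left _ (norm_nonneg _)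
        exact mul_le_mul_of_nonneg_left (key u hu v hv hr hrδ) hK0
    _ = CL * K * ‖L‖ * (‖L u - L v‖ * (Real.log (CL / ‖L u - L v‖)) ^ γ) := by ring
end
end

section
/- Let g : ℝ^m → ℝ^m be continuous and suppose there are constants C₀ > 0, C > 1, 0 < γ ≤ 1 and R ∈ (0, C) such that |g(x) − g(y)| ≤ C₀·|x − y|·(log(C/|x − y|))^γ for all x, y ∈ ℝ^m with 0 < |x − y| ≤ R. Then solutions of ẋ = g(x) are unique: if x, y : [0, T] → ℝ^m are differentiable with ẋ(t) = g(x(t)) and ẏ(t) = g(y(t)) for all t ∈ [0, T], and x(0) = y(0), then x(t) = y(t) for all t ∈ [0, T]. -/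
open Metric Set

noncomputable section

/-- **Osgood uniqueness for log-Lipschitz vector fields.** If
`|g(x) - g(y)| ≤ C₀ |x-y| (log(C/|x-y|))^γ` for `0 < |x-y| ≤ R` with `0 < γ ≤ 1`, `C > 1`
and `R ∈ (0, C)`, then solutions of `ẋ = g(x)` on `[0,T]` are unique. -/
theorem osgood_uniqueness_log_lipschitz
    (m : ℕ) (g : EuclideanSpace ℝ (Fin m) → EuclideanSpace ℝ (Fin m))
    (hg : Continuous g)
    (C₀ C γ R : ℝ) (hC₀ : 0 < C₀) (hC : 1 < C) (hγ0 : 0 < γ) (hγ1 : γ ≤ 1)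
    (hR0 : 0 < R) (hRC : R < C)
    (hmod : ∀ x y : EuclideanSpace ℝ (Fin m), 0 < ‖x - y‖ → ‖x - y‖ ≤ R →
      ‖g x - g y‖ ≤ C₀ * ‖x - y‖ * (Real.log (C / ‖x - y‖)) ^ γ)
    (T : ℝ) (hT : 0 ≤ T)
    (x y : ℝ → EuclideanSpace ℝ (Fin m))
    (hx : ∀ t ∈ Set.Icc 0 T, HasDerivWithinAt x (g (x t)) (Set.Icc 0 T) t)
    (hy : ∀ t ∈ Set.Icc 0 T, HasDerivWithinAt y (g (y t)) (Set.Icc 0 T) t)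
    (h0 : x 0 = y 0) :
    ∀ t ∈ Set.Icc 0 T, x t = y t := by
  have hCpos : (0 : ℝ) < C := lt_trans one_pos hC
  set K : ℝ := 2 * C₀ with hK
  have hKpos : 0 < K := by positivity
  set z : ℝ → EuclideanSpace ℝ (Fin m) := fun t => x t - y t with hzdef
  have hzc : ContinuousOn z (Set.Icc 0 T) := fun s hs =>
    ((hx s hs).continuousWithinAt.sub (hy s hs).continuousWithinAt)
  have hzderiv : ∀ s ∈ Set.Ico 0 T,
      HasDerivWithinAt z (g (x s) - g (y s)) (Set.Ici s) s := by
    intro s hs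
    have h1 : HasDerivWithinAt z (g (x s) - g (y s)) (Set.Icc 0 T) s :=
      (hx s (Set.mem_Icc_of_Ico hs)).sub (hy s (Set.mem_Icc_of_Ico hs))
    exact h1.mono_of_mem_nhdsWithin (Icc_mem_nhdsGE_of_mem hs)
  set r₀ : ℝ := min R (C / Real.exp 1) with hr₀def
  have hr₀pos : 0 < r₀ := lt_min hR0 (div_pos hCpos (Real.exp_pos 1))
  have hr₀C : r₀ < C := lt_of_le_of_lt (min_le_left _ _) hRC
  have hlogpos : 0 < Real.log (C / r₀) :=
    Real.log_pos (by rw [lt_div_iff₀ hr₀pos]; linarith)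
  -- main bound with supersolution B L t = C * exp(-(L * exp(-K t)))
  have key : ∀ L : ℝ, Real.log (C / r₀) * Real.exp (K * T) ≤ L →
      ∀ s ∈ Set.Icc 0 T, ‖z s‖ ≤ C * Real.exp (-(L * Real.exp (-K * s))) := by
    intro L hL
    have hLpos : 0 < L :=
      lt_of_lt_of_le (by positivity) hL
    set B : ℝ → ℝ := fun s => C * Real.exp (-(L * Real.exp (-K * s))) with hBdef
    set B' : ℝ → ℝ := fun s =>
      C * Real.exp (-(L * Real.exp (-K * s))) * (L * K * Real.exp (-K * s)) with hB'def
    have hBpos : ∀ s, 0 < B s := fun s => by positivity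
    have hBderiv : ∀ s : ℝ, HasDerivAt B (B' s) s := by
      intro s
      have h1 : HasDerivAt (fun t : ℝ => -K * t) (-K) s := by
        simpa using (hasDerivAt_id s).const_mul (-K)
      have h2 := h1.exp
      have h3 := ((h2.const_mul L).neg).exp.const_mul C
      convert h3 using 1
      · rfl
      · rfl
      · rfl
      · simp only [hB'def, Pi.neg_apply]
        ring
    have hlogB : ∀ s : ℝ, Real.log (C / B s) = L * Real.exp (-K * s) := by
      intro s
      rw [Real.log_div (ne_of_gt hCpos) (ne_of_gt (hBpos s)), hBdef]
      rw [Real.log_mul (ne_of_gt hCpos) (ne_of_gt (Real.exp_pos _)), Real.log_exp]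
      ring
    have hBle : ∀ s ∈ Set.Icc 0 T, B s ≤ r₀ := by
      intro s hs
      have h1 : Real.exp (-K * T) ≤ Real.exp (-K * s) :=
        Real.exp_le_exp.2 (by nlinarith [hs.2])
      have h2 : Real.log (C / r₀) ≤ L * Real.exp (-K * T) := by
        have he : Real.exp (K * T) * Real.exp (-K * T) = 1 := by
          rw [← Real.exp_add]; ring_nf; exact Real.exp_zero
        nlinarith [mul_le_mul_of_nonneg_right hL (le_of_lt (Real.exp_pos (-K * T)))]
      have h3 : Real.log (C / r₀) ≤ L * Real.exp (-K * s) :=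
        h2.trans (by nlinarith [Real.exp_pos (-K*s)])
      have h4 : B s ≤ C * Real.exp (-Real.log (C / r₀)) := by
        apply mul_le_mul_of_nonneg_left _ (le_of_lt hCpos)
        exact Real.exp_le_exp.2 (by linarith)
      calc B s ≤ C * Real.exp (-Real.log (C / r₀)) := h4
        _ = r₀ := by
            rw [Real.exp_neg, Real.exp_log (div_pos hCpos hr₀pos)]
            field_simp
    -- touching-point bound, strict
    have hbound : ∀ s ∈ Set.Ico 0 T, ‖z s‖ = B s → ‖g (x s) - g (y s)‖ < B' s := by
      intro s hs hzB
      have hsIcc : s ∈ Set.Icc 0 T := Set.mem_Icc_of_Ico hs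
      have hBs := hBpos s
      have hzB' : ‖x s - y s‖ = B s := hzB
      have hzpos : 0 < ‖x s - y s‖ := by rw [hzB']; exact hBs
      have hzR : ‖x s - y s‖ ≤ R := by
        have := (hBle s hsIcc)
        calc ‖x s - y s‖ = B s := hzB'
          _ ≤ r₀ := this
          _ ≤ R := min_le_left _ _
      have hmod' := hmod (x s) (y s) hzpos hzR
      have hlog1 : 1 ≤ Real.log (C / ‖x s - y s‖) := by
        rw [hzB]
        have hBr : B s ≤ C / Real.exp 1 := (hBle s hsIcc).trans (min_le_right _ _)
        rw [Real.le_log_iff_exp_le (div_pos hCpos hBs)]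
        rw [le_div_iff₀ hBs]
        calc Real.exp 1 * B s ≤ Real.exp 1 * (C / Real.exp 1) :=
              mul_le_mul_of_nonneg_left hBr (le_of_lt (Real.exp_pos 1))
          _ = C := by field_simp
      have hpow : (Real.log (C / ‖x s - y s‖)) ^ γ ≤ Real.log (C / ‖x s - y s‖) := by
        calc (Real.log (C / ‖x s - y s‖)) ^ γ
            ≤ (Real.log (C / ‖x s - y s‖)) ^ (1:ℝ) :=
              Real.rpow_le_rpow_of_exponent_le hlog1 hγ1
          _ = Real.log (C / ‖x s - y s‖) := Real.rpow_one _
      have hstep : ‖g (x s) - g (y s)‖ ≤ C₀ * B s * (L * Real.exp (-K * s)) := by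
        calc ‖g (x s) - g (y s)‖ ≤ C₀ * ‖x s - y s‖ * (Real.log (C / ‖x s - y s‖)) ^ γ := hmod'
          _ ≤ C₀ * ‖x s - y s‖ * Real.log (C / ‖x s - y s‖) := by
              apply mul_le_mul_of_nonneg_left hpow (by positivity)
          _ = C₀ * B s * Real.log (C / B s) := by rw [hzB]
          _ = C₀ * B s * (L * Real.exp (-K * s)) := by rw [hlogB]
      have hBeq : B' s = K * B s * (L * Real.exp (-K * s)) := by
        simp only [hB'def, hBdef]; ring
      have hstrict : C₀ * B s * (L * Real.exp (-K * s)) < K * B s * (L * Real.exp (-K * s)) := by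
        have h1 : 0 < B s * (L * Real.exp (-K * s)) := by positivity
        nlinarith
      rw [hBeq]
      exact lt_of_le_of_lt hstep hstrict
    have hz0 : ‖z 0‖ ≤ B 0 := by
      simp only [hzdef, h0, sub_self, norm_zero]
      exact le_of_lt (hBpos 0)
    exact fun s hs =>
      image_norm_le_of_norm_deriv_right_lt_deriv_boundary hzc hzderiv hz0 hBderiv hbound hs
  -- limit L → ∞
  intro t ht
  have hev : ∀ᶠ L in Filter.atTop, ‖z t‖ ≤ C * Real.exp (-(L * Real.exp (-K * t))) :=
    Filter.eventually_atTop.2 ⟨Real.log (C / r₀) * Real.exp (K * T),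
      fun L hL => key L hL t ht⟩
  have htend : Filter.Tendsto (fun L : ℝ => C * Real.exp (-(L * Real.exp (-K * t))))
      Filter.atTop (nhds 0) := by
    have h1 : Filter.Tendsto (fun L : ℝ => L * Real.exp (-K * t)) Filter.atTop Filter.atTop :=
      Filter.Tendsto.atTop_mul_const (Real.exp_pos _) Filter.tendsto_id
    have h2 : Filter.Tendsto (fun L : ℝ => -(L * Real.exp (-K * t))) Filter.atTop Filter.atBot :=
      Filter.tendsto_neg_atBot_iff.2 h1
    have h3 := Real.tendsto_exp_atBot.comp h2
    have h4 := h3.const_mul C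
    simpa using h4
  have : ‖z t‖ ≤ 0 := ge_of_tendsto htend hev
  have hzt : z t = 0 := norm_le_zero_iff.1 this
  simpa [hzdef, sub_eq_zero] using hzt
end
end

section
/- Let φ : ℝ^m → [0, +∞) be C¹ and proper, let δ > 0, set P := {x ∈ ℝ^m : φ(x) ≤ δ}, and suppose ∇φ(x) ≠ 0 whenever φ(x) ≥ δ. Let v : ℝ^m → ℝ^m be continuous with v(x) = −∇φ(x) for every x with φ(x) ≥ δ. Then for every bounded set B ⊆ ℝ^m there exists T > 0 such that every differentiable curve x : [0, +∞) → ℝ^m with ẋ(t) = v(x(t)) for all t ≥ 0 and x(0) ∈ B satisfies x(t₀) ∈ P for some t₀ ∈ [0, T]. In fact one may take any T with C − cT < δ, where C := sup_{x ∈ B} φ(x) and c := inf{‖∇φ(x)‖² : δ ≤ φ(x) ≤ C} > 0. -/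
open Metric Set Bornology

noncomputable section

/-- **Bounded sets enter the sublevel set `P = {φ ≤ δ}` in finite time.** Suppose
`φ : ℝ^m → [0,∞)` is `C¹` and proper, `∇φ ≠ 0` on `{φ ≥ δ}`, and `v` is a continuous vector
field with `v = -∇φ` on `{φ ≥ δ}`. Then for every bounded `B` there is `T > 0` such that
every forward solution of `ẋ = v(x)` starting in `B` meets `P` at some time `t₀ ∈ [0,T]`.
In fact, with `C := sup_B φ` and `c := inf {‖∇φ‖² : δ ≤ φ ≤ C}` (a positive number), any
`T > 0` with `C - cT < δ` works. -/
theorem bounded_sets_enter_sublevel_set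
    (m : ℕ)
    (φ : EuclideanSpace ℝ (Fin m) → ℝ)
    (hφ : ContDiff ℝ 1 φ) (hφnn : ∀ x, 0 ≤ φ x)
    (hproper : ∀ s t : ℝ, s < t → IsCompact (φ ⁻¹' Set.Icc s t))
    (δ : ℝ) (hδ : 0 < δ)
    (hgrad : ∀ x, δ ≤ φ x → gradient φ x ≠ 0)
    (v : EuclideanSpace ℝ (Fin m) → EuclideanSpace ℝ (Fin m)) (hv : Continuous v)
    (hveq : ∀ x, δ ≤ φ x → v x = -gradient φ x)
    (B : Set (EuclideanSpace ℝ (Fin m))) (hB : IsBounded B) :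
    -- there is a uniform entry time `T` for all solutions starting in `B`
    (∃ T : ℝ, 0 < T ∧ ∀ x : ℝ → EuclideanSpace ℝ (Fin m),
        (∀ t : ℝ, 0 ≤ t → HasDerivWithinAt x (v (x t)) (Set.Ici 0) t) → x 0 ∈ B →
        ∃ t₀ ∈ Set.Icc (0 : ℝ) T, φ (x t₀) ≤ δ) ∧
    -- the infimum `c` is positive (when the set `{δ ≤ φ ≤ C}` is nonempty)
    ({x | δ ≤ φ x ∧ φ x ≤ sSup (φ '' B)}.Nonempty →
      0 < sInf ((fun x => ‖gradient φ x‖ ^ 2) '' {x | δ ≤ φ x ∧ φ x ≤ sSup (φ '' B)})) ∧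
    -- in fact any `T > 0` with `C - cT < δ` works
    (∀ T : ℝ, 0 < T →
      sSup (φ '' B) -
          sInf ((fun x => ‖gradient φ x‖ ^ 2) '' {x | δ ≤ φ x ∧ φ x ≤ sSup (φ '' B)}) * T
        < δ →
      ∀ x : ℝ → EuclideanSpace ℝ (Fin m),
        (∀ t : ℝ, 0 ≤ t → HasDerivWithinAt x (v (x t)) (Set.Ici 0) t) → x 0 ∈ B →
        ∃ t₀ ∈ Set.Icc (0 : ℝ) T, φ (x t₀) ≤ δ) := by
  classical
  have hφc : Continuous φ := hφ.continuous
  set C := sSup (φ '' B) with hCdef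
  set g : EuclideanSpace ℝ (Fin m) → ℝ := fun y => ‖gradient φ y‖ ^ 2 with hgdef
  set K : Set (EuclideanSpace ℝ (Fin m)) := {y | δ ≤ φ y ∧ φ y ≤ C} with hKdef
  set c := sInf (g '' K) with hcdef
  -- continuity of the gradient
  have hgradcont : Continuous fun y => gradient φ y := by
    have h1 : Continuous (fderiv ℝ φ) := hφ.continuous_fderiv one_ne_zero
    exact (InnerProductSpace.toDual ℝ
      (EuclideanSpace ℝ (Fin m))).symm.continuous.comp h1
  have hgcont : Continuous g := (hgradcont.norm.pow 2)
  -- boundedness of `φ '' B`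
  have hBdd : BddAbove (φ '' B) := by
    have h1 : BddAbove (φ '' closure B) :=
      (hB.isCompact_closure.image hφc).bddAbove
    exact h1.mono (Set.image_mono subset_closure)
  -- `c` is bounded below by `0`
  have hlb : ∀ y ∈ g '' K, (0:ℝ) ≤ y := by
    rintro y ⟨z, _, rfl⟩; positivity
  have hbddbelow : BddBelow (g '' K) := ⟨0, hlb⟩
  -- positivity of `c` when `K` is nonempty
  have hpos : K.Nonempty → 0 < c := by
    rintro ⟨x₀, hx₀⟩
    have hδC : δ ≤ C := hx₀.1.trans hx₀.2
    have hKcl : IsClosed K := isClosed_Icc.preimage hφc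
    have hKsub : K ⊆ φ ⁻¹' Set.Icc (δ/2) C := fun y hy => ⟨by linarith [hy.1], hy.2⟩
    have hKcp : IsCompact K :=
      (hproper (δ/2) C (by linarith)).of_isClosed_subset hKcl hKsub
    obtain ⟨x₁, hx₁K, hmin⟩ := hKcp.exists_isMinOn ⟨x₀, hx₀⟩ hgcont.continuousOn
    have hgx₁ : 0 < g x₁ := pow_pos (norm_pos_iff.mpr (hgrad _ hx₁K.1)) 2
    refine lt_of_lt_of_le hgx₁ (le_csInf ⟨g x₀, ⟨x₀, hx₀, rfl⟩⟩ ?_)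
    rintro y ⟨z, hz, rfl⟩
    exact hmin hz
  -- the key quantitative statement
  have key : ∀ T : ℝ, 0 < T → C - c * T < δ →
      ∀ x : ℝ → EuclideanSpace ℝ (Fin m),
        (∀ t : ℝ, 0 ≤ t → HasDerivWithinAt x (v (x t)) (Set.Ici 0) t) → x 0 ∈ B →
        ∃ t₀ ∈ Set.Icc (0 : ℝ) T, φ (x t₀) ≤ δ := by
    intro T hT hTc x hx hx0
    by_contra hcon
    push_neg at hcon
    have contra : ∀ t ∈ Set.Icc (0:ℝ) T, δ < φ (x t) := hcon
    -- derivative of `φ ∘ x` on the interior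
    have hderiv : ∀ t ∈ Set.Ioo (0:ℝ) T,
        HasDerivAt (fun s => φ (x s)) (-(‖gradient φ (x t)‖ ^ 2)) t := by
      intro t ht
      have hx' : HasDerivAt x (v (x t)) t :=
        (hx t ht.1.le).hasDerivAt (Ici_mem_nhds ht.1)
      have hg : HasFDerivAt φ
          (InnerProductSpace.toDual ℝ (EuclideanSpace ℝ (Fin m)) (gradient φ (x t))) (x t) :=
        ((hφ.differentiable one_ne_zero) (x t)).hasGradientAt.hasFDerivAt
      have hcomp := hg.comp_hasDerivAt t hx'
      have hval : (InnerProductSpace.toDual ℝ (EuclideanSpace ℝ (Fin m))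
          (gradient φ (x t))) (v (x t)) = -(‖gradient φ (x t)‖ ^ 2) := by
        rw [hveq _ (contra t ⟨ht.1.le, ht.2.le⟩).le, InnerProductSpace.toDual_apply_apply,
          inner_neg_right, real_inner_self_eq_norm_sq]
      rw [hval] at hcomp
      exact hcomp
    -- continuity of `φ ∘ x` on `[0, T]`
    have hfc : ContinuousOn (fun s => φ (x s)) (Set.Icc 0 T) := by
      intro t ht
      exact hφc.continuousAt.comp_continuousWithinAt
        (((hx t ht.1).continuousWithinAt).mono Set.Icc_subset_Ici_self)
    -- `φ ∘ x` is antitone on `[0, T]`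
    have hmono : AntitoneOn (fun s => φ (x s)) (Set.Icc 0 T) := by
      apply antitoneOn_of_deriv_nonpos (convex_Icc 0 T) hfc
      · intro t ht
        rw [interior_Icc] at ht
        exact (hderiv t ht).differentiableAt.differentiableWithinAt
      · intro t ht
        rw [interior_Icc] at ht
        rw [(hderiv t ht).deriv]
        have : (0:ℝ) ≤ ‖gradient φ (x t)‖ ^ 2 := by positivity
        linarith
    have hC0 : φ (x 0) ≤ C := le_csSup hBdd ⟨x 0, hx0, rfl⟩
    have hle : ∀ t ∈ Set.Icc (0:ℝ) T, φ (x t) ≤ C := by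
      intro t ht
      exact (hmono (Set.left_mem_Icc.2 hT.le) ht ht.1).trans hC0
    -- `x t ∈ K` for all `t ∈ [0, T]`, so `c ≤ ‖∇φ (x t)‖²`
    have hcK : ∀ t ∈ Set.Icc (0:ℝ) T, c ≤ ‖gradient φ (x t)‖ ^ 2 := by
      intro t ht
      exact csInf_le hbddbelow ⟨x t, ⟨(contra t ht).le, hle t ht⟩, rfl⟩
    -- the shifted function is antitone
    have hmono2 : AntitoneOn (fun s => φ (x s) + c * s) (Set.Icc 0 T) := by
      have hcs : Continuous fun s : ℝ => c * s := continuous_const.mul continuous_id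
      apply antitoneOn_of_deriv_nonpos (convex_Icc 0 T) (hfc.add hcs.continuousOn)
      · intro t ht
        rw [interior_Icc] at ht
        exact ((hderiv t ht).add
          ((hasDerivAt_id t).const_mul c)).differentiableAt.differentiableWithinAt
      · intro t ht
        rw [interior_Icc] at ht
        have hD : HasDerivAt (fun s => φ (x s) + c * s)
            (-(‖gradient φ (x t)‖ ^ 2) + c * 1) t :=
          (hderiv t ht).add ((hasDerivAt_id t).const_mul c)
        change deriv (fun s => φ (x s) + c * s) t ≤ 0
        rw [hD.deriv]
        have := hcK t ⟨ht.1.le, ht.2.le⟩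
        linarith
    have hfinal := hmono2 (Set.left_mem_Icc.2 hT.le) (Set.right_mem_Icc.2 hT.le) hT.le
    simp only [mul_zero, add_zero] at hfinal
    have hTmem : T ∈ Set.Icc (0:ℝ) T := Set.right_mem_Icc.2 hT.le
    have := contra T hTmem
    have : δ < φ (x T) := this
    linarith [hC0]
  refine ⟨?_, hpos, key⟩
  by_cases hne : K.Nonempty
  · have hc : 0 < c := hpos hne
    refine ⟨max 1 ((C - δ)/c + 1), lt_of_lt_of_le one_pos (le_max_left _ _), ?_⟩
    apply key _ (lt_of_lt_of_le one_pos (le_max_left _ _))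
    have h1 : (C - δ)/c + 1 ≤ max 1 ((C - δ)/c + 1) := le_max_right _ _
    have h2 : c * ((C - δ)/c + 1) ≤ c * max 1 ((C - δ)/c + 1) :=
      mul_le_mul_of_nonneg_left h1 hc.le
    have h3 : c * ((C - δ)/c + 1) = (C - δ) + c := by
      field_simp
    nlinarith
  · refine ⟨1, one_pos, ?_⟩
    intro x hx hx0
    refine ⟨0, ⟨le_rfl, zero_le_one⟩, ?_⟩
    by_contra h
    push_neg at h
    exact hne ⟨x 0, h.le, le_csSup hBdd ⟨x 0, hx0, rfl⟩⟩
end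
end

section
/- Let X ⊆ ℝ^n be a nonempty compact set and let ψ : ℝ^n → [0, +∞) be a continuous proper function with ψ^{-1}(0) = X, such that ψ is C¹ on ℝ^n \ X with ∇ψ(x) ≠ 0 for all x ∉ X and with nonempty level sets F_t := ψ^{-1}(t) for every t > 0. Define M(t) := max_{x ∈ F_t} max_{1 ≤ i ≤ n} |∂ψ/∂x_i(x)| for t > 0. Let b : [0, +∞) → [0, +∞) be a C¹ function with b(0) = 0, b'(0) = 0, b'(t) > 0 for t > 0, and b'(t) ≤ t/M(t) for all t > 0. Then b∘ψ is C¹ on all of ℝ^n, its partial derivatives satisfy |∂(b∘ψ)/∂x_i(x)| ≤ ψ(x) for all x ∉ X and 1 ≤ i ≤ n, and ∇(b∘ψ)(x) = 0 if and only if x ∈ X. -/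
open Metric Set
open Topology Filter

noncomputable section

lemma euclid_abs_apply_le_norm {n : ℕ} (v : EuclideanSpace ℝ (Fin n)) (i : Fin n) :
    |v i| ≤ ‖v‖ := by
  have h := abs_real_inner_le_norm (EuclideanSpace.single i (1:ℝ)) v
  rwa [EuclideanSpace.inner_single_left, EuclideanSpace.norm_single, norm_one, one_mul,
    starRingEnd_apply, star_one, one_mul] at h

lemma euclid_sum_single {n : ℕ} (v : EuclideanSpace ℝ (Fin n)) :
    ∑ i, v i • EuclideanSpace.single i (1:ℝ) = v := by
  have h := (EuclideanSpace.basisFun (Fin n) ℝ).sum_repr v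
  simpa [EuclideanSpace.basisFun_apply, EuclideanSpace.basisFun_repr] using h

lemma euclid_opNorm_le {n : ℕ} (L : EuclideanSpace ℝ (Fin n) →L[ℝ] ℝ) {c : ℝ} (hc : 0 ≤ c)
    (h : ∀ i, |L (EuclideanSpace.single i 1)| ≤ c) : ‖L‖ ≤ n * c := by
  refine L.opNorm_le_bound (by positivity) fun v => ?_
  calc ‖L v‖ = |∑ i, v i * L (EuclideanSpace.single i 1)| := by
        rw [show L v = L (∑ i, v i • EuclideanSpace.single i (1:ℝ)) by rw [euclid_sum_single]]
        rw [map_sum]; simp [smul_eq_mul, Real.norm_eq_abs]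
    _ ≤ ∑ i, |v i * L (EuclideanSpace.single i 1)| := Finset.abs_sum_le_sum_abs _ _
    _ ≤ ∑ _i : Fin n, ‖v‖ * c := by
        refine Finset.sum_le_sum fun i _ => ?_
        rw [abs_mul]
        exact mul_le_mul (euclid_abs_apply_le_norm v i) (h i) (abs_nonneg _) (norm_nonneg _)
    _ = n * c * ‖v‖ := by rw [Finset.sum_const, Finset.card_univ, Fintype.card_fin]; ring

lemma euclid_clm_eq_zero {n : ℕ} (L : EuclideanSpace ℝ (Fin n) →L[ℝ] ℝ)
    (h : ∀ i, L (EuclideanSpace.single i 1) = 0) : L = 0 := by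
  ext v
  rw [show L v = L (∑ i, v i • EuclideanSpace.single i (1:ℝ)) by rw [euclid_sum_single]]
  rw [map_sum]; simp [h]

lemma gradient_eq_zero_iff' {n : ℕ} (f : EuclideanSpace ℝ (Fin n) → ℝ)
    (x : EuclideanSpace ℝ (Fin n)) : gradient f x = 0 ↔ fderiv ℝ f x = 0 := by
  unfold gradient
  exact (InnerProductSpace.toDual ℝ _).symm.map_eq_zero_iff


set_option maxHeartbeats 1000000 in
/-- **Smoothing a proper function by composing with a flat diffeomorphism.** Let `X ⊆ ℝ^n`
be nonempty and compact, `ψ : ℝ^n → [0,∞)` continuous and proper with `ψ⁻¹(0) = X`, `C¹` on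
`ℝ^n \ X` with nonvanishing gradient there and nonempty level sets `F_t` for `t > 0`, and
let `M t` be the maximum over `F_t` of the maximal absolute partial derivative of `ψ`. If
`b : [0,∞) → [0,∞)` is `C¹` with `b 0 = 0`, `b' 0 = 0`, `b' t > 0` and `b' t ≤ t / M t` for
`t > 0`, then `b ∘ ψ` is `C¹` on all of `ℝ^n`, its partial derivatives off `X` are bounded by
`ψ`, and its gradient vanishes exactly on `X`. -/
theorem smoothing_composition_C1
    (n : ℕ) (X : Set (EuclideanSpace ℝ (Fin n))) (hXne : X.Nonempty) (hXcomp : IsCompact X)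
    (ψ : EuclideanSpace ℝ (Fin n) → ℝ)
    (hψcont : Continuous ψ) (hψnn : ∀ x, 0 ≤ ψ x)
    (hproper : ∀ s t : ℝ, s < t → IsCompact (ψ ⁻¹' Set.Icc s t))
    (hzero : ψ ⁻¹' {0} = X)
    (hψsm : ContDiffOn ℝ 1 ψ Xᶜ)
    (hψgrad : ∀ x ∉ X, gradient ψ x ≠ 0)
    (hlevel : ∀ t : ℝ, 0 < t → ∃ x, x ∉ X ∧ ψ x = t)
    (M : ℝ → ℝ)
    (hM : ∀ t : ℝ, 0 < t →
      IsGreatest {v : ℝ | ∃ x, x ∉ X ∧ ψ x = t ∧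
        v = ⨆ i : Fin n, |fderiv ℝ ψ x (EuclideanSpace.single i 1)|} (M t))
    (b : ℝ → ℝ)
    (hb : ContDiffOn ℝ 1 b (Set.Ici 0))
    (hbnn : ∀ t : ℝ, 0 ≤ t → 0 ≤ b t)
    (hb0 : b 0 = 0)
    (hb'0 : derivWithin b (Set.Ici 0) 0 = 0)
    (hb'pos : ∀ t : ℝ, 0 < t → 0 < derivWithin b (Set.Ici 0) t)
    (hb'le : ∀ t : ℝ, 0 < t → derivWithin b (Set.Ici 0) t ≤ t / M t) :
    ContDiff ℝ 1 (b ∘ ψ) ∧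
    (∀ x ∉ X, ∀ i : Fin n, |fderiv ℝ (b ∘ ψ) x (EuclideanSpace.single i 1)| ≤ ψ x) ∧
    (∀ x, gradient (b ∘ ψ) x = 0 ↔ x ∈ X) := by
  -- dispense with the degenerate case `n = 0`
  rcases isEmpty_or_nonempty (Fin n) with hn | hn
  · obtain ⟨x, hx, -⟩ := hlevel 1 one_pos
    obtain ⟨x₀, hx₀⟩ := hXne
    have : x = x₀ := by ext i; exact hn.elim i
    exact absurd (this ▸ hx₀) hx
  have hXc : IsClosed X := hXcomp.isClosed
  have hco : IsOpen Xᶜ := hXc.isOpen_compl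
  have hψX : ∀ x ∈ X, ψ x = 0 := fun x hx => by rw [← hzero] at hx; exact hx
  have hψpos : ∀ x ∉ X, 0 < ψ x := by
    intro x hx
    rcases (hψnn x).lt_or_eq with h | h
    · exact h
    · exact absurd (show x ∈ ψ ⁻¹' {0} from h.symm) (by rw [hzero]; exact hx)
  -- derivative of the composition off `X`
  have hfd : ∀ z ∉ X, HasFDerivAt (b ∘ ψ)
      (derivWithin b (Set.Ici 0) (ψ z) • fderiv ℝ ψ z) z := by
    intro z hz
    have hIci : Set.Ici (0:ℝ) ∈ 𝓝 (ψ z) := Ici_mem_nhds (hψpos z hz)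
    have hbψ : HasDerivAt b (derivWithin b (Set.Ici 0) (ψ z)) (ψ z) := by
      rw [derivWithin_of_mem_nhds hIci]
      exact ((hb.contDiffAt hIci).differentiableAt one_ne_zero).hasDerivAt
    have hψz : HasFDerivAt ψ (fderiv ℝ ψ z) z :=
      ((hψsm.contDiffAt (hco.mem_nhds hz)).differentiableAt one_ne_zero).hasFDerivAt
    exact hbψ.comp_hasFDerivAt z hψz
  -- `M t` bounds the partial derivatives on the level set, and is positive
  have hMub : ∀ t : ℝ, 0 < t → ∀ z, z ∉ X → ψ z = t →
      ∀ i, |fderiv ℝ ψ z (EuclideanSpace.single i 1)| ≤ M t := by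
    intro t ht z hz hzt i
    exact le_trans (le_ciSup (f := fun j => |fderiv ℝ ψ z (EuclideanSpace.single j 1)|) (Set.Finite.bddAbove (Set.finite_range _)) i)
      ((hM t ht).2 ⟨z, hz, hzt, rfl⟩)
  have hψfne : ∀ z ∉ X, fderiv ℝ ψ z ≠ 0 := by
    intro z hz h
    exact hψgrad z hz ((gradient_eq_zero_iff' ψ z).2 h)
  have hMpos : ∀ t : ℝ, 0 < t → 0 < M t := by
    intro t ht
    obtain ⟨z, hz, hzt⟩ := hlevel t ht
    have h2 : ∃ i, fderiv ℝ ψ z (EuclideanSpace.single i 1) ≠ 0 := by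
      by_contra h
      push_neg at h
      exact hψfne z hz (euclid_clm_eq_zero _ h)
    obtain ⟨i, hi⟩ := h2
    exact lt_of_lt_of_le (abs_pos.2 hi) (hMub t ht z hz hzt i)
  -- the partial-derivative bound, second conclusion
  have hbd : ∀ z ∉ X, ∀ i : Fin n,
      |fderiv ℝ (b ∘ ψ) z (EuclideanSpace.single i 1)| ≤ ψ z := by
    intro z hz i
    rw [(hfd z hz).fderiv]
    set t := ψ z with htdef
    have ht : 0 < t := hψpos z hz
    set c := derivWithin b (Set.Ici 0) t with hcdef
    have hc : 0 < c := hb'pos t ht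
    rw [ContinuousLinearMap.smul_apply, smul_eq_mul, abs_mul, abs_of_pos hc]
    calc c * |fderiv ℝ ψ z (EuclideanSpace.single i 1)| ≤ c * M t :=
          mul_le_mul_of_nonneg_left (hMub t ht z hz rfl i) hc.le
      _ ≤ (t / M t) * M t := mul_le_mul_of_nonneg_right (hb'le t ht) (hMpos t ht).le
      _ = t := div_mul_cancel₀ t (hMpos t ht).ne'
  -- operator norm bound off X
  have hopX : ∀ z ∉ X, ‖fderiv ℝ (b ∘ ψ) z‖ ≤ n * ψ z := fun z hz =>
    euclid_opNorm_le _ (hψnn z) (hbd z hz)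
  have hfzero : ∀ x ∈ X, (b ∘ ψ) x = 0 := fun x hx => by
    simp [Function.comp, hψX x hx, hb0]
  have hfc : Continuous (b ∘ ψ) :=
    (hb.continuousOn.comp_continuous hψcont fun x => hψnn x)
  -- derivative zero on X
  have hzeroder : ∀ x ∈ X, HasFDerivAt (b ∘ ψ) (0 : EuclideanSpace ℝ (Fin n) →L[ℝ] ℝ) x := by
    intro x hx
    refine HasFDerivAt.of_isLittleO ?_
    rw [Asymptotics.isLittleO_iff]
    intro cc hcc
    set ε := cc / (n + 1) with hεdef
    have hn1 : (0:ℝ) < n + 1 := by positivity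
    have hεpos : 0 < ε := by positivity
    have hnc : (n:ℝ) * ε ≤ cc := by
      rw [hεdef, mul_div_assoc']
      rw [div_le_iff₀ hn1]
      nlinarith [hcc.le]
    have hev : ∀ᶠ y in 𝓝 x, ψ y < ε := by
      have := hψcont.tendsto x
      rw [hψX x hx] at this
      exact this.eventually_lt_const hεpos
    obtain ⟨δ, hδpos, hδ⟩ := Metric.eventually_nhds_iff_ball.1 hev
    filter_upwards [ball_mem_nhds x hδpos] with y hy
    rw [hfzero x hx, ContinuousLinearMap.zero_apply, sub_zero, sub_zero]
    -- main claim : ‖(b∘ψ) y‖ ≤ n * ε * ‖y - x‖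
    have claim : ‖(b ∘ ψ) y‖ ≤ (n * ε) * ‖y - x‖ := by
      by_cases hyX : y ∈ X
      · rw [hfzero y hyX, norm_zero]
        positivity
      · set γ : ℝ → EuclideanSpace ℝ (Fin n) := fun s => x + s • (y - x) with hγdef
        have hγcont : Continuous γ := by
          exact continuous_const.add (continuous_id.smul continuous_const)
        set S : Set ℝ := {s : ℝ | s ∈ Set.Icc (0:ℝ) 1 ∧ γ s ∈ X} with hSdef
        have hScl : IsClosed S := (isClosed_Icc.preimage continuous_id).inter
          (hXc.preimage hγcont)
        have h0S : (0:ℝ) ∈ S := ⟨⟨le_refl 0, zero_le_one⟩, by simp [hγdef, hx]⟩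
        have hSbdd : BddAbove S := ⟨1, fun s hs => hs.1.2⟩
        set s₀ := sSup S with hs₀def
        have hs₀S : s₀ ∈ S := hScl.csSup_mem ⟨0, h0S⟩ hSbdd
        have hs₀0 : 0 ≤ s₀ := hs₀S.1.1
        have hγ1 : γ 1 = y := by simp [hγdef]
        have hs₀1 : s₀ < 1 := by
          rcases lt_or_eq_of_le hs₀S.1.2 with h | h
          · exact h
          · exact absurd (by rw [← hγ1, ← h]; exact hs₀S.2) hyX
        have hoffX : ∀ s ∈ Set.Ioc s₀ 1, γ s ∉ X := by
          intro s hs hsX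
          exact absurd (le_csSup hSbdd ⟨⟨hs₀0.trans hs.1.le, hs.2⟩, hsX⟩) (not_le.2 hs.1)
        set C := (n : ℝ) * ε * ‖y - x‖ with hCdef
        have hC0 : 0 ≤ C := by positivity
        have hseg : ∀ s ∈ Set.Ioc s₀ 1, ‖(b ∘ ψ) y - (b ∘ ψ) (γ s)‖ ≤ C * (1 - s) := by
          intro s hs
          have hγball : ∀ u ∈ Set.Icc s 1, γ u ∈ ball x δ := by
            intro u hu
            have hu0 : 0 ≤ u := (hs₀0.trans hs.1.le).trans hu.1
            rw [mem_ball, dist_eq_norm, hγdef]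
            simp only [add_sub_cancel_left]
            rw [norm_smul, Real.norm_eq_abs, abs_of_nonneg hu0]
            calc u * ‖y - x‖ ≤ 1 * ‖y - x‖ :=
                  mul_le_mul_of_nonneg_right hu.2 (norm_nonneg _)
              _ = ‖y - x‖ := one_mul _
              _ < δ := by rw [← dist_eq_norm]; exact mem_ball.1 hy
          have hγnX : ∀ u ∈ Set.Icc s 1, γ u ∉ X := fun u hu =>
            hoffX u ⟨hs.1.trans_le hu.1, hu.2⟩
          have hder : ∀ u ∈ Set.Icc s 1, HasDerivWithinAt (fun v => (b ∘ ψ) (γ v))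
              ((fderiv ℝ (b ∘ ψ) (γ u)) (y - x)) (Set.Icc s 1) u := by
            intro u hu
            have h1 : HasFDerivAt (b ∘ ψ) (fderiv ℝ (b ∘ ψ) (γ u)) (γ u) :=
              (hfd (γ u) (hγnX u hu)).differentiableAt.hasFDerivAt
            have h2 : HasDerivAt γ (y - x) u := by
              have := ((hasDerivAt_id u).smul_const (y - x)).const_add x
              simpa [hγdef] using this
            exact (h1.comp_hasDerivAt u h2).hasDerivWithinAt
          have hbound : ∀ u ∈ Set.Ico s 1, ‖(fderiv ℝ (b ∘ ψ) (γ u)) (y - x)‖ ≤ C := by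
            intro u hu
            have hu' : u ∈ Set.Icc s 1 := ⟨hu.1, hu.2.le⟩
            calc ‖(fderiv ℝ (b ∘ ψ) (γ u)) (y - x)‖
                ≤ ‖fderiv ℝ (b ∘ ψ) (γ u)‖ * ‖y - x‖ :=
                  ContinuousLinearMap.le_opNorm _ _
              _ ≤ ((n : ℝ) * ψ (γ u)) * ‖y - x‖ :=
                  mul_le_mul_of_nonneg_right (hopX _ (hγnX u hu')) (norm_nonneg _)
              _ ≤ C := by
                  rw [hCdef]
                  have := (hδ _ (hγball u hu')).le
                  have hn0 : (0:ℝ) ≤ n := Nat.cast_nonneg n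
                  nlinarith [norm_nonneg (y - x), hψnn (γ u)]
          have := norm_image_sub_le_of_norm_deriv_le_segment' hder hbound 1
            (Set.right_mem_Icc.2 hs.2)
          rw [hγ1] at this
          linarith [this]
        -- take the limit s → s₀⁺
        refine le_of_forall_pos_le_add fun η hη => ?_
        have hg0 : b (ψ (γ s₀)) = 0 := by rw [hψX _ hs₀S.2, hb0]
        have htend : Filter.Tendsto (fun s => ‖(b ∘ ψ) (γ s)‖) (𝓝 s₀) (𝓝 0) := by
          have h := ((hfc.comp hγcont).tendsto s₀).norm
          simp only [Function.comp_apply] at h ⊢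
          rwa [hg0, norm_zero] at h
        have hev2 : ∀ᶠ s in 𝓝[>] s₀, ‖(b ∘ ψ) (γ s)‖ < η :=
          ((htend.eventually_lt_const hη).filter_mono nhdsWithin_le_nhds)
        have hmem : Set.Ioc s₀ 1 ∈ 𝓝[>] s₀ := Ioc_mem_nhdsGT_of_mem ⟨le_refl _, hs₀1⟩
        obtain ⟨s, hsη, hsIoc⟩ := (hev2.and (Filter.eventually_of_mem hmem fun _ h => h)).exists
        calc ‖(b ∘ ψ) y‖ = ‖((b ∘ ψ) y - (b ∘ ψ) (γ s)) + (b ∘ ψ) (γ s)‖ := by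
              rw [sub_add_cancel]
          _ ≤ ‖(b ∘ ψ) y - (b ∘ ψ) (γ s)‖ + ‖(b ∘ ψ) (γ s)‖ := norm_add_le _ _
          _ ≤ C * (1 - s) + η := add_le_add (hseg s hsIoc) hsη.le
          _ ≤ C + η := by
              have hs0 : 0 ≤ s := hs₀0.trans hsIoc.1.le
              nlinarith
    calc ‖(b ∘ ψ) y‖ ≤ (n * ε) * ‖y - x‖ := claim
      _ ≤ cc * ‖y - x‖ := mul_le_mul_of_nonneg_right hnc (norm_nonneg _)
  -- global differentiability and the fderiv on X
  have hdiff : Differentiable ℝ (b ∘ ψ) := by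
    intro z
    by_cases hz : z ∈ X
    · exact (hzeroder z hz).differentiableAt
    · exact (hfd z hz).differentiableAt
  have hfX : ∀ x ∈ X, fderiv ℝ (b ∘ ψ) x = 0 := fun x hx => (hzeroder x hx).fderiv
  have hopAll : ∀ z, ‖fderiv ℝ (b ∘ ψ) z‖ ≤ n * ψ z := by
    intro z
    by_cases hz : z ∈ X
    · rw [hfX z hz, norm_zero]
      exact mul_nonneg (Nat.cast_nonneg n) (hψnn z)
    · exact hopX z hz
  -- continuity of the derivative
  have hcd : Continuous (fderiv ℝ (b ∘ ψ)) := by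
    rw [continuous_iff_continuousAt]
    intro z
    by_cases hz : z ∈ X
    · rw [ContinuousAt, hfX z hz]
      apply squeeze_zero_norm hopAll
      have : Continuous (fun w => (n : ℝ) * ψ w) := continuous_const.mul hψcont
      have := this.tendsto z
      rwa [hψX z hz, mul_zero] at this
    · have hbψc : ContDiffOn ℝ 1 (b ∘ ψ) Xᶜ := hb.comp hψsm fun y _ => hψnn y
      exact (hbψc.continuousOn_fderiv_of_isOpen hco le_rfl).continuousAt (hco.mem_nhds hz)
  refine ⟨contDiff_one_iff_fderiv.2 ⟨hdiff, hcd⟩, hbd, ?_⟩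
  intro x
  rw [gradient_eq_zero_iff']
  constructor
  · intro h
    by_contra hx
    have := (hfd x hx).fderiv
    rw [h] at this
    exact smul_ne_zero (hb'pos _ (hψpos x hx)).ne' (hψfne x hx) this.symm
  · intro hx
    exact hfX x hx
end
end
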